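/- Let A be a commutative ring, Δ a finite group acting on A by ring automorphisms with B = A^Δ, and suppose A/B is Galois with group Δ in the sense that the natural map A ⊗_B A → ∏_{δ∈Δ} A (sending x ⊗ y to (x·δ(y))_δ) is an isomorphism. Let M be an A-module with a semilinear Δ-action (g(am) = g(a)g(m)). If A is faithfully flat over B, then Hⁿ(Δ, M) = 0 for all n ≥ 1. -/

import Mathlib

open scoped TensorProduct

/-- The subring of `Δ`-fixed points of a ring with a `Δ`-action. -/
def fixedSubring (Δ A : Type) [Group Δ] [CommRing A] [MulSemiringAction Δ A] : Subring A where
  carrier := {a | ∀ g : Δ, g • a = a}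
  zero_mem' := fun g => smul_zero g
  one_mem' := fun g => smul_one g
  add_mem' := fun {a b} ha hb g => by rw [smul_add, ha g, hb g]
  mul_mem' := fun {a b} ha hb g => by rw [smul_mul', ha g, hb g]
  neg_mem' := fun {a} ha g => by rw [smul_neg, ha g]

section auxcontract
variable {α : Type*} {n : ℕ}

lemma contractNth_zero_cons (op : α → α → α) (x : α) (g : Fin (n + 1) → α) :
    Fin.contractNth 0 op (Fin.cons x g) = Fin.cons (op x (g 0)) (fun i => g i.succ) := by
  funext k
  refine Fin.cases ?_ (fun i => ?_) k
  · rw [Fin.contractNth_apply_of_eq _ _ _ _ (by simp)]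
    rw [Fin.castSucc_zero, Fin.cons_zero, Fin.cons_succ, Fin.cons_zero]
  · rw [Fin.contractNth_apply_of_gt _ _ _ _ (by simp)]
    simp

lemma contractNth_succ_cons (op : α → α → α) (x : α) (g : Fin (n + 1) → α) (j : Fin (n + 1)) :
    Fin.contractNth j.succ op (Fin.cons x g) = Fin.cons x (Fin.contractNth j op g) := by
  funext k
  refine Fin.cases ?_ (fun i => ?_) k
  · rw [Fin.contractNth_apply_of_lt _ _ _ _ (by simp)]
    simp
  · rcases lt_trichotomy (i : ℕ) (j : ℕ) with h | h | h
    · rw [Fin.contractNth_apply_of_lt _ _ _ _ (by simp [h]),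
        Fin.cons_succ, ← Fin.succ_castSucc, Fin.cons_succ,
        Fin.contractNth_apply_of_lt _ _ _ _ h]
    · rw [Fin.contractNth_apply_of_eq _ _ _ _ (by simp [h]),
        Fin.cons_succ, ← Fin.succ_castSucc, Fin.cons_succ, Fin.cons_succ,
        Fin.contractNth_apply_of_eq _ _ _ _ h]
    · rw [Fin.contractNth_apply_of_gt _ _ _ _ (by simp [h]),
        Fin.cons_succ, Fin.cons_succ,
        Fin.contractNth_apply_of_gt _ _ _ _ h]

end auxcontract

open CategoryTheory

/-- Galois descent vanishing: if `Δ` is a finite group acting on a commutative ring `A`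
with fixed ring `B = A^Δ`, `A/B` is Galois with group `Δ` (the map
`A ⊗_B A → ∏_{δ∈Δ} A`, `x ⊗ y ↦ (x·δy)_δ`, is bijective), `A` is faithfully flat over
`B`, and `M` is an `A`-module with semilinear `Δ`-action, then `Hⁿ(Δ, M) = 0` for `n ≥ 1`. -/
theorem stmt18 (Δ A M : Type) [Group Δ] [Finite Δ] [CommRing A] [MulSemiringAction Δ A]
    [AddCommGroup M] [Module A M] [DistribMulAction Δ M]
    (hsemi : ∀ (g : Δ) (a : A) (m : M), g • (a • m) = (g • a) • (g • m))
    (galois :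
      letI : Algebra (fixedSubring Δ A) A := (fixedSubring Δ A).subtype.toAlgebra
      ∃ Γ : A ⊗[fixedSubring Δ A] A →ₗ[fixedSubring Δ A] (Δ → A),
        (∀ x y : A, Γ (x ⊗ₜ y) = fun δ => x * δ • y) ∧ Function.Bijective Γ)
    (hflat :
      letI : Algebra (fixedSubring Δ A) A := (fixedSubring Δ A).subtype.toAlgebra
      Module.FaithfullyFlat (fixedSubring Δ A) A)
    (n : ℕ) (hn : 1 ≤ n) :
    Subsingleton (groupCohomology (Rep.of (Representation.ofDistribMulAction ℤ Δ M)) n) := by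
  classical
  letI : Algebra (fixedSubring Δ A) A := (fixedSubring Δ A).subtype.toAlgebra
  obtain ⟨Γ, hΓ, hΓbij⟩ := galois
  letI : Fintype Δ := Fintype.ofFinite Δ
  have hfix : ∀ (b : fixedSubring Δ A) (δ : Δ), δ • (b : A) = (b : A) := fun b δ => b.2 δ
  have hsmulBA : ∀ (b : fixedSubring Δ A) (a : A), b • a = (b : A) * a := fun b a => by
    rw [Algebra.smul_def, RingHom.algebraMap_toAlgebra]; rfl
  have htrfix : ∀ a : A, ∀ g : Δ, g • (∑ δ : Δ, δ • a) = ∑ δ : Δ, δ • a := by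
    intro a g
    rw [Finset.smul_sum]
    exact Fintype.sum_equiv (Equiv.mulLeft g) _ _ (fun δ => by simp [smul_smul])
  let tr : A →ₗ[fixedSubring Δ A] fixedSubring Δ A :=
    { toFun := fun a => ⟨∑ δ : Δ, δ • a, htrfix a⟩
      map_add' := fun a b => by
        apply Subtype.ext
        show (∑ δ : Δ, δ • (a + b)) = (∑ δ : Δ, δ • a) + (∑ δ : Δ, δ • b)
        simp [smul_add, Finset.sum_add_distrib]
      map_smul' := fun b a => by
        apply Subtype.ext
        show (∑ δ : Δ, δ • (b • a)) = (b : A) * (∑ δ : Δ, δ • a)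
        rw [Finset.mul_sum]
        refine Finset.sum_congr rfl fun δ _ => ?_
        rw [hsmulBA, smul_mul', hfix] }
  -- surjectivity of the trace, via the Galois isomorphism and faithful flatness
  have hsum_mem : ∀ z : A ⊗[fixedSubring Δ A] A,
      (∑ δ : Δ, Γ z δ) ∈
        (LinearMap.range tr) • (⊤ : Submodule (fixedSubring Δ A) A) := by
    intro z
    induction z using TensorProduct.induction_on with
    | zero => simpa using Submodule.zero_mem _
    | tmul x y =>
        have he : (∑ δ : Δ, Γ (x ⊗ₜ[fixedSubring Δ A] y) δ) = tr y • x := by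
          simp only [hΓ]
          rw [hsmulBA, ← Finset.mul_sum, mul_comm]
          rfl
        rw [he]
        exact Submodule.smul_mem_smul (LinearMap.mem_range_self tr y) trivial
    | add z w hz hw =>
        rw [map_add]
        simpa [Finset.sum_add_distrib] using Submodule.add_mem _ hz hw
  obtain ⟨w, hw⟩ := hΓbij.2 (fun δ => if δ = 1 then (1 : A) else 0)
  have hone : (1 : A) ∈
      (LinearMap.range tr) • (⊤ : Submodule (fixedSubring Δ A) A) := by
    have h := hsum_mem w
    rw [hw] at h
    simpa using h
  have htop : (LinearMap.range tr : Ideal (fixedSubring Δ A)) = ⊤ := by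
    by_contra hne
    obtain ⟨mI, hmI, hle⟩ := Ideal.exists_le_maximal _ hne
    refine hflat.submodule_ne_top hmI ?_
    rw [eq_top_iff]
    intro a _
    have h1 : (1 : A) ∈ mI • (⊤ : Submodule (fixedSubring Δ A) A) :=
      Submodule.smul_mono_left hle hone
    have hmul : ∀ x ∈ mI • (⊤ : Submodule (fixedSubring Δ A) A),
        a * x ∈ mI • (⊤ : Submodule (fixedSubring Δ A) A) := by
      intro x hx
      refine Submodule.smul_induction_on hx (fun r hr nn _ => ?_) (fun x y hx hy => ?_)
      · rw [mul_smul_comm]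
        exact Submodule.smul_mem_smul hr trivial
      · rw [mul_add]; exact Submodule.add_mem _ hx hy
    simpa using hmul 1 h1
  obtain ⟨a₀, ha₀⟩ : ∃ a₀ : A, tr a₀ = 1 := (Ideal.eq_top_iff_one _).1 htop
  have htr1 : (∑ δ : Δ, δ • a₀) = (1 : A) := congrArg Subtype.val ha₀
  -- main part
  obtain ⟨m, rfl⟩ : ∃ m, n = m + 1 := ⟨n - 1, (Nat.succ_pred_eq_of_pos hn).symm⟩
  set V : Rep ℤ Δ := Rep.of (Representation.ofDistribMulAction ℤ Δ M) with hV
  suffices hex : (groupCohomology.inhomogeneousCochains V).ExactAt (m + 1) by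
    rw [HomologicalComplex.exactAt_iff_isZero_homology] at hex
    have hzero : ∀ x : groupCohomology V (m + 1), x = 0 := by
      intro x
      have h : (𝟙 (HomologicalComplex.homology (groupCohomology.inhomogeneousCochains V) (m + 1)) :
            _ ⟶ _).hom x
          = (0 : HomologicalComplex.homology (groupCohomology.inhomogeneousCochains V) (m + 1) ⟶
              HomologicalComplex.homology (groupCohomology.inhomogeneousCochains V) (m + 1)).hom x := by
        rw [hex.eq_of_src (𝟙 _) 0]
      exact h
    exact ⟨fun x y => by rw [hzero x, hzero y]⟩
  rw [HomologicalComplex.exactAt_iff' _ m (m + 1) ((m + 1) + 1)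
    (CochainComplex.prev_nat_succ m) (CochainComplex.next ℕ (m + 1))]
  rw [ShortComplex.moduleCat_exact_iff]
  intro f2 hf2
  set f : (Fin (m + 1) → Δ) → M := f2 with hfdef
  have hdf : (_root_.inhomogeneousCochains.d V (m + 1)).hom f = 0 := by
    have h : ((groupCohomology.inhomogeneousCochains V).d (m + 1) ((m + 1) + 1)).hom f = 0 := hf2
    rwa [groupCohomology.inhomogeneousCochains.d_def] at h
  refine ⟨(fun h => ∑ δ : Δ, (δ • a₀) • (δ • f (Fin.cons δ⁻¹ h)) : (Fin m → Δ) → M), ?_⟩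
  have key : ∀ g : Fin (m + 1) → Δ,
      (_root_.inhomogeneousCochains.d V m).hom
        (fun h => ∑ δ : Δ, (δ • a₀) • (δ • f (Fin.cons δ⁻¹ h))) g = f g := by
    intro g
    have hrel : ∀ δ : Δ,
        δ • (f (Fin.cons (δ⁻¹ * g 0) (fun i => g i.succ))
          + ∑ j : Fin (m + 1), (-1 : ℤ) ^ ((j : ℕ) + 1) •
              f (Fin.cons δ⁻¹ (Fin.contractNth j (· * ·) g))) = f g := by
      intro δ
      have h := congrFun hdf (Fin.cons δ⁻¹ g)
      rw [_root_.inhomogeneousCochains.d_hom_apply, Pi.zero_apply] at h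
      simp only [Fin.cons_zero, Fin.cons_succ] at h
      rw [Fin.sum_univ_succ] at h
      simp only [Fin.val_zero, zero_add, pow_one, Fin.val_succ, contractNth_zero_cons,
        contractNth_succ_cons, neg_smul, one_smul] at h
      have hs : ∑ j : Fin (m + 1), (-1 : ℤ) ^ ((j : ℕ) + 1 + 1) •
          f (Fin.cons δ⁻¹ (Fin.contractNth j (· * ·) g))
          = - ∑ j : Fin (m + 1), (-1 : ℤ) ^ ((j : ℕ) + 1) •
              f (Fin.cons δ⁻¹ (Fin.contractNth j (· * ·) g)) := by
        rw [← Finset.sum_neg_distrib]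
        refine Finset.sum_congr rfl fun j _ => ?_
        rw [pow_succ, mul_smul]
        simp
      rw [hs] at h
      have h2 : δ⁻¹ • f g
          = f (Fin.cons (δ⁻¹ * g 0) (fun i => g i.succ))
            + ∑ j : Fin (m + 1), (-1 : ℤ) ^ ((j : ℕ) + 1) •
                f (Fin.cons δ⁻¹ (Fin.contractNth j (· * ·) g)) := by
        have h3 := eq_neg_of_add_eq_zero_left h
        rw [neg_add, neg_neg, neg_neg] at h3
        exact h3
      rw [← h2, smul_inv_smul]
    have e1 : (g 0) • (∑ δ : Δ, (δ • a₀) • (δ • f (Fin.cons δ⁻¹ (fun i => g i.succ))))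
        = ∑ δ : Δ, (δ • a₀) • (δ • f (Fin.cons (δ⁻¹ * g 0) (fun i => g i.succ))) := by
      rw [Finset.smul_sum]
      refine Fintype.sum_equiv (Equiv.mulLeft (g 0)) _ _ fun δ => ?_
      simp only [Equiv.coe_mulLeft]
      rw [show (g 0 * δ)⁻¹ * g 0 = δ⁻¹ by group]
      rw [hsemi, smul_smul, smul_smul]
    have e3 : ∀ j : Fin (m + 1), (-1 : ℤ) ^ ((j : ℕ) + 1) •
        (∑ δ : Δ, (δ • a₀) • (δ • f (Fin.cons δ⁻¹ (Fin.contractNth j (· * ·) g))))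
        = ∑ δ : Δ, (δ • a₀) • (δ • ((-1 : ℤ) ^ ((j : ℕ) + 1) •
            f (Fin.cons δ⁻¹ (Fin.contractNth j (· * ·) g)))) := by
      intro j
      rw [Finset.smul_sum]
      refine Finset.sum_congr rfl fun δ _ => ?_
      rw [smul_comm ((-1 : ℤ) ^ ((j : ℕ) + 1)) (δ • a₀),
        smul_comm ((-1 : ℤ) ^ ((j : ℕ) + 1)) δ]
    rw [_root_.inhomogeneousCochains.d_hom_apply]
    show (g 0) • (∑ δ : Δ, (δ • a₀) • (δ • f (Fin.cons δ⁻¹ (fun i => g i.succ))))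
          + ∑ j : Fin (m + 1), (-1 : ℤ) ^ ((j : ℕ) + 1) •
              (∑ δ : Δ, (δ • a₀) • (δ • f (Fin.cons δ⁻¹ (Fin.contractNth j (· * ·) g))))
        = f g
    calc (g 0) • (∑ δ : Δ, (δ • a₀) • (δ • f (Fin.cons δ⁻¹ (fun i => g i.succ))))
          + ∑ j : Fin (m + 1), (-1 : ℤ) ^ ((j : ℕ) + 1) •
              (∑ δ : Δ, (δ • a₀) • (δ • f (Fin.cons δ⁻¹ (Fin.contractNth j (· * ·) g))))
        = (∑ δ : Δ, (δ • a₀) • (δ • f (Fin.cons (δ⁻¹ * g 0) (fun i => g i.succ))))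
          + ∑ j : Fin (m + 1), ∑ δ : Δ, (δ • a₀) • (δ • ((-1 : ℤ) ^ ((j : ℕ) + 1) •
              f (Fin.cons δ⁻¹ (Fin.contractNth j (· * ·) g)))) := by
          rw [e1]
          congr 1
          exact Finset.sum_congr rfl fun j _ => e3 j
      _ = (∑ δ : Δ, (δ • a₀) • (δ • f (Fin.cons (δ⁻¹ * g 0) (fun i => g i.succ))))
          + ∑ δ : Δ, ∑ j : Fin (m + 1), (δ • a₀) • (δ • ((-1 : ℤ) ^ ((j : ℕ) + 1) •
              f (Fin.cons δ⁻¹ (Fin.contractNth j (· * ·) g)))) := by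
          rw [Finset.sum_comm]
      _ = ∑ δ : Δ, ((δ • a₀) • (δ • f (Fin.cons (δ⁻¹ * g 0) (fun i => g i.succ)))
          + ∑ j : Fin (m + 1), (δ • a₀) • (δ • ((-1 : ℤ) ^ ((j : ℕ) + 1) •
              f (Fin.cons δ⁻¹ (Fin.contractNth j (· * ·) g))))) := Finset.sum_add_distrib.symm
      _ = ∑ δ : Δ, (δ • a₀) • (δ • (f (Fin.cons (δ⁻¹ * g 0) (fun i => g i.succ))
          + ∑ j : Fin (m + 1), (-1 : ℤ) ^ ((j : ℕ) + 1) •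
              f (Fin.cons δ⁻¹ (Fin.contractNth j (· * ·) g)))) := by
          refine Finset.sum_congr rfl fun δ _ => ?_
          rw [smul_add, smul_add, Finset.smul_sum, Finset.smul_sum]
      _ = ∑ δ : Δ, (δ • a₀) • f g := Finset.sum_congr rfl fun δ _ => by rw [hrel δ]
      _ = (∑ δ : Δ, δ • a₀) • f g := Finset.sum_smul.symm
      _ = f g := by rw [htr1, one_smul]
  show ((groupCohomology.inhomogeneousCochains V).d m (m + 1)).hom
      (fun h => ∑ δ : Δ, (δ • a₀) • (δ • f (Fin.cons δ⁻¹ h))) = f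
  rw [groupCohomology.inhomogeneousCochains.d_def]
  exact funext key
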